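/- Let v_1,...,v_n ∈ ℤⁿ be linearly independent. Then there is a permutation σ of {1,...,n} and a basis of ℤⁿ (equivalently, a matrix U ∈ GL_n(ℤ)) such that the matrix with columns U·v_{σ(1)},...,U·v_{σ(n)} is upper triangular with nonnegative entries, each off-diagonal entry strictly less than the diagonal entry in its column, and the diagonal entries equal to 1 precisely in the first r columns for some 0 ≤ r ≤ n (i.e., diagonal entries B_{11} = ... = B_{rr} = 1 and B_{jj} ≥ 2 for j > r). -/

import Mathlib

open Matrix

namespace HNF

/-- gcd of absolute values of entries. -/
def Dnat {n : ℕ} (a : Fin n → ℤ) : ℕ := Finset.univ.gcd fun i => (a i).natAbs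

lemma Dnat_dvd {n : ℕ} (a : Fin n → ℤ) (i : Fin n) : (Dnat a : ℤ) ∣ a i := by
  have := Finset.gcd_dvd (f := fun i => (a i).natAbs) (Finset.mem_univ i)
  rw [← Int.natAbs_dvd_natAbs]
  rw [Int.natAbs_natCast]
  exact this

lemma Dnat_eq_zero_iff {n : ℕ} (a : Fin n → ℤ) : Dnat a = 0 ↔ a = 0 := by
  constructor
  · intro h
    funext i
    have := Dnat_dvd a i
    rw [h] at this
    simpa using zero_dvd_iff.mp (by simpa using this)
  · intro h; subst h; simp [Dnat, Finset.gcd_eq_zero_iff]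

lemma dvd_Dnat {n : ℕ} (a : Fin n → ℤ) (g : ℕ) (h : ∀ i, (g : ℤ) ∣ a i) : g ∣ Dnat a := by
  refine Finset.dvd_gcd fun i _ => ?_
  have := h i
  rw [← Int.natAbs_natCast g]
  rw [← Int.natAbs_dvd_natAbs] at this
  simpa using this

/-- mulVec of a permutation matrix. -/
lemma permMatrix_mulVec {n : ℕ} (σ : Equiv.Perm (Fin n)) (a : Fin n → ℤ) :
    (Equiv.Perm.permMatrix ℤ σ).mulVec a = a ∘ σ := by
  funext i
  simp only [Equiv.Perm.permMatrix, Matrix.mulVec, dotProduct, PEquiv.toMatrix_apply,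
    Equiv.toPEquiv_apply, Option.mem_def, Option.some.injEq]
  rw [Finset.sum_eq_single (σ i)]
  · simp
  · intro b _ hb; simp [Ne.symm hb, hb]
  · simp

lemma transvection_mulVec {n : Type*} [DecidableEq n] [Fintype n] (i j : n) (c : ℤ)
    (a : n → ℤ) (k : n) :
    (Matrix.transvection i j c).mulVec a k = if k = i then a i + c * a j else a k := by
  simp only [Matrix.transvection, Matrix.add_mulVec, Matrix.one_mulVec, Pi.add_apply]
  have : (Matrix.single i j c).mulVec a k = if k = i then c * a j else 0 := by
    simp only [Matrix.mulVec, dotProduct, Matrix.single]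
    rw [Finset.sum_eq_single j]
    · rcases eq_or_ne k i with h | h
      · subst h; simp
      · simp [h, Ne.symm h]
    · intro b _ hb; simp [Ne.symm hb]
    · simp
  rw [this]
  by_cases h : k = i <;> simp [h]


lemma int_gcd_emod (x y : ℤ) : Int.gcd y (x % y) = Int.gcd x y := by
  have hxy : y * (x / y) + x % y = x := Int.mul_ediv_add_emod x y
  apply Nat.dvd_antisymm
  · rw [← Int.natCast_dvd_natCast]
    refine Int.dvd_coe_gcd ?_ (Int.gcd_dvd_left _ _)
    calc (↑(Int.gcd y (x % y)) : ℤ) ∣ y * (x / y) + x % y :=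
          dvd_add (Dvd.dvd.mul_right (Int.gcd_dvd_left _ _) _) (Int.gcd_dvd_right _ _)
      _ = x := hxy
  · rw [← Int.natCast_dvd_natCast]
    refine Int.dvd_coe_gcd (Int.gcd_dvd_right _ _) ?_
    have : x % y = x - y * (x / y) := by omega
    rw [this]
    exact dvd_sub (Int.gcd_dvd_left _ _) (Dvd.dvd.mul_right (Int.gcd_dvd_right _ _) _)

lemma sign_fix {n : Type*} [DecidableEq n] [Fintype n] (a : n → ℤ) (i : n) :
    ∃ W : Matrix n n ℤ, IsUnit W.det ∧
      ∀ k, W.mulVec a k = if k = i then |a i| else a k := by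
  refine ⟨Matrix.diagonal (fun k => if k = i then (if a i < 0 then -1 else 1) else 1), ?_, ?_⟩
  · rw [Matrix.det_diagonal, Finset.prod_eq_single i]
    · rcases lt_or_ge (a i) 0 with h | h <;> simp [h, Int.isUnit_iff]
    · intro b _ hb; simp [hb]
    · simp
  · intro k
    rw [Matrix.mulVec_diagonal]
    rcases eq_or_ne k i with h | h
    · subst h
      rcases lt_or_ge (a k) 0 with h' | h' <;> simp [abs_of_neg, abs_of_nonneg, h'] <;> omega
    · simp [h]

/-- Euclidean algorithm on a pair of coordinates, by a unimodular matrix. -/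
lemma pair_gcd {n : ℕ} : ∀ (N : ℕ) (a : Fin n → ℤ) (i j : Fin n), i ≠ j →
    (a j).natAbs ≤ N →
    ∃ W : Matrix (Fin n) (Fin n) ℤ, IsUnit W.det ∧
      ∀ k, W.mulVec a k =
        if k = i then (Int.gcd (a i) (a j) : ℤ) else if k = j then 0 else a k := by
  intro N
  induction N with
  | zero =>
    intro a i j hij hN
    have hj : a j = 0 := by omega
    obtain ⟨W, hW, hWv⟩ := sign_fix a i
    refine ⟨W, hW, fun k => ?_⟩
    rw [hWv k]
    rcases eq_or_ne k i with h | h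
    · subst h; rw [hj]; simp
    · rcases eq_or_ne k j with h' | h' <;> simp [h, h', hj]
  | succ N IH =>
    intro a i j hij hN
    by_cases hj : a j = 0
    · -- same argument as base case
      obtain ⟨W, hW, hWv⟩ := sign_fix a i
      refine ⟨W, hW, fun k => ?_⟩
      rw [hWv k]
      rcases eq_or_ne k i with h | h
      · subst h; rw [hj]; simp
      · rcases eq_or_ne k j with h' | h' <;> simp [h, h', hj]
    · set q := a i / a j with hq
      set W1 := Matrix.transvection i j (-q) with hW1
      set a1 := W1.mulVec a with ha1
      have ha1k : ∀ k, a1 k = if k = i then a i % a j else a k := by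
        intro k
        rw [ha1, hW1, transvection_mulVec]
        rcases eq_or_ne k i with h | h <;> simp [h, Int.emod_def, hq] <;> ring
      set W2 := (Equiv.swap i j).permMatrix ℤ with hW2
      set a2 := W2.mulVec a1 with ha2
      have ha2k : ∀ k, a2 k = if k = i then a j else if k = j then a i % a j else a k := by
        intro k
        rw [ha2, hW2, permMatrix_mulVec]
        rcases eq_or_ne k i with h | h
        · subst h
          simp [Equiv.swap_apply_left, ha1k, hij.symm, hij]
        · rcases eq_or_ne k j with h' | h'
          · subst h'
            simp [Equiv.swap_apply_right, ha1k, h]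
          · simp [Function.comp, Equiv.swap_apply_of_ne_of_ne h h', ha1k, h, h']
      have hlt : (a2 j).natAbs ≤ N := by
        have h1 : 0 ≤ a i % a j := Int.emod_nonneg _ hj
        have h2 : a i % a j < |a j| := by rw [Int.abs_eq_natAbs]; exact Int.emod_lt _ hj
        rw [Int.abs_eq_natAbs] at h2
        have := ha2k j
        rw [if_neg hij.symm, if_pos rfl] at this
        rw [this]
        omega
      obtain ⟨W3, hW3, hW3v⟩ := IH a2 i j hij hlt
      refine ⟨W3 * (W2 * W1), ?_, fun k => ?_⟩
      · rw [Matrix.det_mul, Matrix.det_mul]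
        refine (hW3.mul ((?_ : IsUnit W2.det).mul ?_))
        · rw [hW2, Matrix.det_permutation]
          exact Units.isUnit _
        · rw [hW1, Matrix.det_transvection_of_ne _ _ hij]
          exact isUnit_one
      · rw [← Matrix.mulVec_mulVec, ← Matrix.mulVec_mulVec, ← ha1, ← ha2, hW3v k]
        have hgcd : Int.gcd (a2 i) (a2 j) = Int.gcd (a i) (a j) := by
          rw [ha2k i, ha2k j, if_pos rfl, if_neg hij.symm, if_pos rfl]
          exact int_gcd_emod (a i) (a j)
        rcases eq_or_ne k i with h | h
        · subst h; simp [hgcd]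
        · rcases eq_or_ne k j with h' | h' <;> simp [h, h', ha2k k, Ne.symm hij]

lemma loop (n : ℕ) : ∀ (m : ℕ) (a : Fin (n+1) → ℤ),
    ∃ W : Matrix (Fin (n+1)) (Fin (n+1)) ℤ, IsUnit W.det ∧ ∀ i, W.mulVec a i =
      if i = 0 then
        (((Finset.univ.filter (fun j : Fin (n+1) => (j:ℕ) ≤ m)).gcd (fun j => (a j).natAbs) : ℕ) : ℤ)
      else if (i:ℕ) ≤ m then 0 else a i := by
  intro m
  induction m with
  | zero =>
    intro a
    obtain ⟨W, hW, hWv⟩ := sign_fix a 0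
    refine ⟨W, hW, fun i => ?_⟩
    rw [hWv i]
    have hset : Finset.univ.filter (fun j : Fin (n+1) => (j:ℕ) ≤ 0) = {0} := by
      ext j
      simp only [Finset.mem_filter, Finset.mem_univ, true_and, Finset.mem_singleton, Fin.ext_iff, Fin.val_zero]
      omega
    rcases eq_or_ne i 0 with h | h
    · subst h
      rw [if_pos rfl, if_pos rfl, hset, Finset.gcd_singleton]; rw [normalize_eq]
      exact Int.abs_eq_natAbs _
    · rw [if_neg h, if_neg h, if_neg]
      exact fun hle => h (Fin.ext (by rw [Fin.val_zero]; omega))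
  | succ m IH =>
    intro a
    obtain ⟨W', hW', hb⟩ := IH a
    set b := W'.mulVec a with hbdef
    by_cases hmn : m + 1 ≤ n
    · set j0 : Fin (n+1) := ⟨m+1, by omega⟩ with hj0
      have hj00 : (0 : Fin (n+1)) ≠ j0 := by simp [hj0, Fin.ext_iff]
      obtain ⟨W'', hW'', hc⟩ := pair_gcd (b j0).natAbs b 0 j0 hj00 le_rfl
      refine ⟨W'' * W', by rw [Matrix.det_mul]; exact hW''.mul hW', fun i => ?_⟩
      rw [← Matrix.mulVec_mulVec, ← hbdef, hc i]
      have hbj0 : b j0 = a j0 := by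
        rw [hb j0, if_neg (Ne.symm hj00), if_neg (by simp [hj0])]
      have hb0 : b 0 = (((Finset.univ.filter (fun j : Fin (n+1) => (j:ℕ) ≤ m)).gcd
          (fun j => (a j).natAbs) : ℕ) : ℤ) := by
        rw [hb 0, if_pos rfl]
      have hins : Finset.univ.filter (fun j : Fin (n+1) => (j:ℕ) ≤ m+1)
          = insert j0 (Finset.univ.filter (fun j : Fin (n+1) => (j:ℕ) ≤ m)) := by
        ext j
        simp only [Finset.mem_filter, Finset.mem_univ, true_and, Finset.mem_insert, hj0,
          Fin.ext_iff]
        omega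
      rcases eq_or_ne i 0 with h | h
      · subst h
        rw [if_pos rfl, if_pos rfl]
        have hg : Int.gcd (b 0) (b j0)
            = (Finset.univ.filter (fun j : Fin (n+1) => (j:ℕ) ≤ m+1)).gcd
                (fun j => (a j).natAbs) := by
          rw [hins, Finset.gcd_insert, hbj0, hb0]
          show Int.gcd _ _ = Nat.gcd _ _
          rw [Int.gcd, Int.natAbs_natCast, Nat.gcd_comm]
        exact congrArg _ hg
      · rw [if_neg h, if_neg h]
        rcases eq_or_ne i j0 with h' | h'
        · subst h'
          rw [if_pos rfl, if_pos (by simp [hj0])]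
        · rw [if_neg h', hb i, if_neg h]
          have : ((i:ℕ) ≤ m) ↔ ((i:ℕ) ≤ m + 1) := by
            have : (i:ℕ) ≠ m+1 := by
              simpa [hj0, Fin.ext_iff] using h'
            omega
          rcases le_or_gt ((i:ℕ)) m with hle | hlt
          · rw [if_pos hle, if_pos (by omega)]
          · rw [if_neg (by omega), if_neg (by omega)]
    · refine ⟨W', hW', fun i => ?_⟩
      rw [← hbdef, hb i]
      have hsets : Finset.univ.filter (fun j : Fin (n+1) => (j:ℕ) ≤ m)
          = Finset.univ.filter (fun j : Fin (n+1) => (j:ℕ) ≤ m+1) := by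
        ext j
        have := j.isLt
        simp only [Finset.mem_filter, Finset.mem_univ, true_and]
        omega
      rcases eq_or_ne i 0 with h | h
      · subst h; rw [if_pos rfl, if_pos rfl, hsets]
      · have := i.isLt
        rw [if_neg h, if_neg h, if_pos (by omega), if_pos (by omega)]

lemma gcd_vec {n : ℕ} (a : Fin (n+1) → ℤ) :
    ∃ W : Matrix (Fin (n+1)) (Fin (n+1)) ℤ, IsUnit W.det ∧
      ∀ i, W.mulVec a i = if i = 0 then (Dnat a : ℤ) else 0 := by
  obtain ⟨W, hW, hWv⟩ := loop n n a
  refine ⟨W, hW, fun i => ?_⟩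
  rw [hWv i]
  have huniv : Finset.univ.filter (fun j : Fin (n+1) => (j:ℕ) ≤ n) = Finset.univ := by
    ext j; have := j.isLt; simp; omega
  rcases eq_or_ne i 0 with h | h
  · subst h; rw [if_pos rfl, if_pos rfl, huniv]; rfl
  · have := i.isLt
    rw [if_neg h, if_neg h, if_pos (by omega)]

lemma det_cons {m : ℕ} (d : ℤ) (c : Fin m → ℤ) (M : Matrix (Fin m) (Fin m) ℤ) :
    (Matrix.of (Fin.cons (Fin.cons d c) (fun i => Fin.cons 0 (M i)) :
        Fin (m+1) → Fin (m+1) → ℤ)).det = d * M.det := by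
  rw [Matrix.det_succ_column_zero, Fin.sum_univ_succ]
  have h0 : ∀ i : Fin m,
      (Matrix.of (Fin.cons (Fin.cons d c) (fun i => Fin.cons 0 (M i)) :
        Fin (m+1) → Fin (m+1) → ℤ)) i.succ 0 = 0 := by
    intro i; simp [Matrix.of_apply, Fin.cons_succ]
  have hsub : (Matrix.of (Fin.cons (Fin.cons d c) (fun i => Fin.cons 0 (M i)) :
        Fin (m+1) → Fin (m+1) → ℤ)).submatrix (Fin.succAbove 0) Fin.succ = M := by
    ext i j
    simp [Fin.succAbove_zero, Fin.cons_succ]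
  simp only [h0, zero_mul, mul_zero, zero_add, add_zero, Finset.sum_const_zero, hsub]
  simp [Fin.cons_zero]

lemma reduce_row : ∀ {m : ℕ} (C : Matrix (Fin m) (Fin m) ℤ),
    (∀ i k, k < i → C i k = 0) → (∀ k, 0 < C k k) → ∀ x : Fin m → ℤ,
    ∃ t : Fin m → ℤ, ∀ k, 0 ≤ x k + Matrix.vecMul t C k ∧
      x k + Matrix.vecMul t C k < C k k := by
  intro m
  induction m with
  | zero => intro C _ _ x; exact ⟨0, fun k => k.elim0⟩
  | succ m IH =>
    intro C hlow hpos x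
    set t0 : ℤ := -(x 0 / C 0 0) with ht0
    set C' : Matrix (Fin m) (Fin m) ℤ := C.submatrix Fin.succ Fin.succ with hC'
    have hlow' : ∀ i k, k < i → C' i k = 0 := fun i k hki =>
      hlow _ _ (by simpa [Fin.succ_lt_succ_iff] using hki)
    have hpos' : ∀ k, 0 < C' k k := fun k => hpos _
    obtain ⟨t', ht'⟩ := IH C' hlow' hpos' (fun k => x k.succ + t0 * C 0 k.succ)
    refine ⟨Fin.cons t0 t', fun k => ?_⟩
    have hvm : ∀ k : Fin (m+1), Matrix.vecMul (Fin.cons t0 t') C k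
        = t0 * C 0 k + ∑ i : Fin m, t' i * C i.succ k := by
      intro k
      rw [Matrix.vecMul, dotProduct, Fin.sum_univ_succ]
      simp [Fin.cons_succ, Fin.cons_zero]
    rcases Fin.eq_zero_or_eq_succ k with h | ⟨k', rfl⟩
    · subst h
      rw [hvm]
      have hz : ∀ i : Fin m, C i.succ 0 = 0 := fun i => hlow _ _ (Fin.succ_pos i)
      simp only [hz, mul_zero, Finset.sum_const_zero, add_zero]
      have hne : C 0 0 ≠ 0 := (hpos 0).ne'
      have hmod : x 0 + t0 * C 0 0 = x 0 % C 0 0 := by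
        rw [ht0, Int.emod_def]; ring
      rw [hmod]
      exact ⟨Int.emod_nonneg _ hne, Int.emod_lt_of_pos _ (hpos 0)⟩
    · rw [hvm]
      have : ∑ i : Fin m, t' i * C i.succ k'.succ = Matrix.vecMul t' C' k' := by
        rw [Matrix.vecMul, dotProduct]; simp [hC']
      rw [this]
      have h := ht' k'
      constructor
      · have := h.1; omega
      · have := h.2
        have hcc : C' k' k' = C k'.succ k'.succ := rfl
        omega

def Good {n : ℕ} (B : Matrix (Fin n) (Fin n) ℤ) (r : ℕ) : Prop :=
  (∀ i k, k < i → B i k = 0) ∧ (∀ i k, 0 ≤ B i k) ∧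
  (∀ i k, i < k → B i k < B k k) ∧
  (∀ k : Fin n, (k : ℕ) < r → B k k = 1) ∧ (∀ k : Fin n, r ≤ (k : ℕ) → 2 ≤ B k k)

lemma main : ∀ (n : ℕ) (A : Matrix (Fin n) (Fin n) ℤ), A.det ≠ 0 →
    ∃ (σ : Equiv.Perm (Fin n)) (U : Matrix (Fin n) (Fin n) ℤ) (r : ℕ),
      r ≤ n ∧ IsUnit U.det ∧ Good (U * A.submatrix id σ) r ∧
      ((∀ c, Dnat (fun i => A i c) ≠ 1) → r = 0) := by
  intro n
  induction n with
  | zero =>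
    intro A _
    exact ⟨1, 1, 0, le_refl 0, by simp, ⟨fun i => i.elim0, fun i => i.elim0,
      fun i => i.elim0, fun k => k.elim0, fun k => k.elim0⟩, fun _ => rfl⟩
  | succ n IH =>
    intro A hA
    classical
    have hcolnz : ∀ c, (fun i => A i c) ≠ 0 := by
      intro c h
      exact hA (Matrix.det_eq_zero_of_column_eq_zero c (fun i => congrFun h i))
    obtain ⟨c, hcchoice⟩ : ∃ c : Fin (n+1),
        (∃ c', Dnat (fun i => A i c') = 1) → Dnat (fun i => A i c) = 1 := by
      by_cases hex : ∃ c', Dnat (fun i => A i c') = 1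
      · obtain ⟨c, hc⟩ := hex; exact ⟨c, fun _ => hc⟩
      · exact ⟨0, fun h => absurd h hex⟩
    set a : Fin (n+1) → ℤ := fun i => A i c with ha
    set d : ℕ := Dnat a with hd
    have hd0 : d ≠ 0 := fun h => hcolnz c ((Dnat_eq_zero_iff a).mp h)
    obtain ⟨W, hW, hWa⟩ := gcd_vec a
    set s : Equiv.Perm (Fin (n+1)) := Equiv.swap 0 c with hs
    set A1 : Matrix (Fin (n+1)) (Fin (n+1)) ℤ := W * (A.submatrix id s) with hA1
    have hA10 : ∀ i, A1 i 0 = if i = 0 then (d:ℤ) else 0 := by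
      intro i
      rw [hA1, Matrix.mul_apply]
      have : ∀ j, A.submatrix id s j 0 = a j := by
        intro j; rw [Matrix.submatrix_apply, ha]; simp [hs, Equiv.swap_apply_left]
      simp only [this]
      rw [← hWa i]
      rfl
    have hA1det : A1.det ≠ 0 := by
      rw [hA1, Matrix.det_mul, Matrix.det_permute']
      intro h
      rcases mul_eq_zero.mp h with h | h
      · exact hW.ne_zero h
      · rcases mul_eq_zero.mp h with h | h
        · exact Units.ne_zero _ (by exact_mod_cast h)
        · exact hA h
    set C : Matrix (Fin n) (Fin n) ℤ := A1.submatrix Fin.succ Fin.succ with hC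
    have hA1C : A1.det = (d:ℤ) * C.det := by
      rw [Matrix.det_succ_column_zero, Fin.sum_univ_succ]
      have hsub : A1.submatrix (Fin.succAbove 0) Fin.succ = C := by
        ext i j
        rw [Matrix.submatrix_apply, hC, Matrix.submatrix_apply, Fin.zero_succAbove]
      simp only [hA10, Fin.succ_ne_zero, if_neg, if_pos, Fin.val_zero, pow_zero, one_mul,
        ite_true, ite_false, zero_mul, mul_zero, Finset.sum_const_zero, add_zero, hsub]
    have hCdet : C.det ≠ 0 := by
      intro h; rw [hA1C, h, mul_zero] at hA1det; exact hA1det rfl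
    obtain ⟨σ', U', r', hr'n, hU', hgood', hclause'⟩ := IH C hCdet
    set B' : Matrix (Fin n) (Fin n) ℤ := U' * C.submatrix id σ' with hB'
    obtain ⟨hlowB', hnnB', hstB', honesB', hge2B'⟩ := hgood'
    have hposB' : ∀ k, 0 < B' k k := by
      intro k
      rcases lt_or_ge (k : ℕ) r' with h | h
      · rw [honesB' k h]; norm_num
      · have := hge2B' k h; omega
    -- permutation τ
    set τ : Equiv.Perm (Fin (n+1)) := Equiv.Perm.decomposeFin.symm (0, σ') with hτ
    have hτ0 : τ 0 = 0 := Equiv.Perm.decomposeFin_symm_apply_zero 0 σ'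
    have hτs : ∀ k : Fin n, τ k.succ = (σ' k).succ := by
      intro k
      rw [hτ, Equiv.Perm.decomposeFin_symm_apply_succ]
      simp
    set A2 : Matrix (Fin (n+1)) (Fin (n+1)) ℤ := A1.submatrix id τ with hA2
    set x : Fin n → ℤ := fun k => A1 0 (σ' k).succ with hx
    set U1 : Matrix (Fin (n+1)) (Fin (n+1)) ℤ :=
      Matrix.of (Fin.cons (Fin.cons 1 0) (fun i => Fin.cons 0 (U' i))) with hU1
    have hU1det : U1.det = U'.det := by rw [hU1, det_cons, one_mul]
    set M3 : Matrix (Fin (n+1)) (Fin (n+1)) ℤ := U1 * A2 with hM3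
    have hA2_0 : ∀ j, A2 j 0 = if j = 0 then (d:ℤ) else 0 := by
      intro j; rw [hA2, Matrix.submatrix_apply, hτ0]; exact hA10 j
    have hA2_s : ∀ (j : Fin (n+1)) (k : Fin n), A2 j k.succ = A1 j (σ' k).succ := by
      intro j k; rw [hA2, Matrix.submatrix_apply, hτs]; rfl
    have hM3_00 : M3 0 0 = (d:ℤ) := by
      rw [hM3, Matrix.mul_apply, Fin.sum_univ_succ]
      simp only [hA2_0, hU1]
      simp [Fin.cons_zero, Fin.cons_succ, Fin.succ_ne_zero]
    have hM3_s0 : ∀ i : Fin n, M3 i.succ 0 = 0 := by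
      intro i
      rw [hM3, Matrix.mul_apply, Fin.sum_univ_succ]
      simp only [hA2_0, hU1]
      simp [Fin.cons_zero, Fin.cons_succ, Fin.succ_ne_zero]
    have hM3_0s : ∀ k : Fin n, M3 0 k.succ = x k := by
      intro k
      rw [hM3, Matrix.mul_apply, Fin.sum_univ_succ]
      simp only [hA2_s, hU1]
      simp [Fin.cons_zero, Fin.cons_succ, hx]
    have hM3_ss : ∀ i k : Fin n, M3 i.succ k.succ = B' i k := by
      intro i k
      rw [hM3, Matrix.mul_apply, Fin.sum_univ_succ]
      simp only [hA2_s, hU1]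
      simp only [Matrix.of_apply, Fin.cons_succ, Fin.cons_zero, zero_mul, zero_add]
      rw [hB', Matrix.mul_apply]
      congr 1
    obtain ⟨t, ht⟩ := reduce_row B' hlowB' hposB' x
    set T : Matrix (Fin (n+1)) (Fin (n+1)) ℤ :=
      Matrix.of (Fin.cons (Fin.cons 1 t)
        (fun i => Fin.cons 0 (fun j => if i = j then (1:ℤ) else 0))) with hT
    have hTdet : T.det = 1 := by
      rw [hT, det_cons (M := fun i j => if i = j then (1:ℤ) else 0), one_mul]
      have h1 : (fun i (j : Fin n) => if i = j then (1:ℤ) else 0)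
          = (1 : Matrix (Fin n) (Fin n) ℤ) := by
        ext i j; by_cases h : i = j <;> simp [h, Matrix.one_apply]
      rw [h1, Matrix.det_one]
    set B : Matrix (Fin (n+1)) (Fin (n+1)) ℤ := T * M3 with hB
    have hTrow0 : ∀ k, B 0 k = M3 0 k + ∑ j : Fin n, t j * M3 j.succ k := by
      intro k
      rw [hB, Matrix.mul_apply, Fin.sum_univ_succ, hT]
      simp [Fin.cons_zero, Fin.cons_succ]
    have hTrows : ∀ (i : Fin n) (k : Fin (n+1)), B i.succ k = M3 i.succ k := by
      intro i k
      rw [hB, Matrix.mul_apply, Fin.sum_univ_succ, hT]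
      simp only [Matrix.of_apply, Fin.cons_succ, Fin.cons_zero, zero_mul, zero_add]
      rw [Finset.sum_eq_single i]
      · simp
      · intro b _ hb; simp [if_neg (Ne.symm hb)]
      · simp
    have hB00 : B 0 0 = (d:ℤ) := by
      rw [hTrow0 0, hM3_00]
      simp [hM3_s0]
    have hB0s : ∀ k : Fin n, B 0 k.succ = x k + Matrix.vecMul t B' k := by
      intro k
      rw [hTrow0 _, hM3_0s]
      congr 1
      have hvm : Matrix.vecMul t B' k = ∑ j, t j * B' j k := rfl
      rw [hvm]
      exact Finset.sum_congr rfl (fun j _ => by rw [hM3_ss])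
    have hBs0 : ∀ i : Fin n, B i.succ 0 = 0 := fun i => by rw [hTrows, hM3_s0]
    have hBss : ∀ i k : Fin n, B i.succ k.succ = B' i k := fun i k => by
      rw [hTrows, hM3_ss]
    set σf : Equiv.Perm (Fin (n+1)) := τ.trans s with hσf
    set Uf : Matrix (Fin (n+1)) (Fin (n+1)) ℤ := T * U1 * W with hUf
    have hUfdet : IsUnit Uf.det := by
      rw [hUf, Matrix.det_mul, Matrix.det_mul, hTdet, hU1det, one_mul]
      exact hU'.mul hW
    have hfactor : Uf * A.submatrix id ⇑σf = B := by
      rw [hUf, hB, hM3, hA2, hA1]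
      have h1 : (W * A.submatrix id ⇑s).submatrix id ⇑τ
          = W * (A.submatrix id ⇑s).submatrix id ⇑τ := by
        ext i k; simp [Matrix.mul_apply]
      rw [h1, Matrix.submatrix_submatrix]
      have h2 : ((⇑s ∘ ⇑τ) : Fin (n+1) → Fin (n+1)) = ⇑σf := rfl
      have h3 : ((id ∘ id) : Fin (n+1) → Fin (n+1)) = id := rfl
      rw [h3, h2]
      simp [Matrix.mul_assoc]
    -- shared Good components
    have hlowB : ∀ i k : Fin (n+1), k < i → B i k = 0 := by
      intro i k hki
      rcases Fin.eq_zero_or_eq_succ i with rfl | ⟨i', rfl⟩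
      · exact absurd hki (Fin.not_lt_zero k)
      · rcases Fin.eq_zero_or_eq_succ k with rfl | ⟨k', rfl⟩
        · exact hBs0 i'
        · rw [hBss]
          exact hlowB' i' k' (by rwa [Fin.succ_lt_succ_iff] at hki)
    have hnnB : ∀ i k : Fin (n+1), 0 ≤ B i k := by
      intro i k
      rcases Fin.eq_zero_or_eq_succ i with rfl | ⟨i', rfl⟩
      · rcases Fin.eq_zero_or_eq_succ k with rfl | ⟨k', rfl⟩
        · rw [hB00]; exact_mod_cast Nat.zero_le d
        · rw [hB0s]; exact (ht k').1
      · rcases Fin.eq_zero_or_eq_succ k with rfl | ⟨k', rfl⟩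
        · rw [hBs0]
        · rw [hBss]; exact hnnB' i' k'
    have hstB : ∀ i k : Fin (n+1), i < k → B i k < B k k := by
      intro i k hik
      rcases Fin.eq_zero_or_eq_succ k with rfl | ⟨k', rfl⟩
      · exact absurd hik (Fin.not_lt_zero i)
      · rcases Fin.eq_zero_or_eq_succ i with rfl | ⟨i', rfl⟩
        · rw [hB0s, hBss]; exact (ht k').2
        · rw [hBss, hBss]
          exact hstB' i' k' (by rwa [Fin.succ_lt_succ_iff] at hik)
    by_cases hd1 : d = 1
    · refine ⟨σf, Uf, r' + 1, by omega, hUfdet, ?_, ?_⟩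
      · rw [hfactor]
        refine ⟨hlowB, hnnB, hstB, ?_, ?_⟩
        · intro k hk
          rcases Fin.eq_zero_or_eq_succ k with rfl | ⟨k', rfl⟩
          · rw [hB00]; exact_mod_cast hd1
          · rw [hBss]
            refine honesB' k' ?_
            have : (k'.succ : ℕ) = (k' : ℕ) + 1 := Fin.val_succ k'
            omega
        · intro k hk
          rcases Fin.eq_zero_or_eq_succ k with rfl | ⟨k', rfl⟩
          · simp at hk
          · rw [hBss]
            refine hge2B' k' ?_
            have : (k'.succ : ℕ) = (k' : ℕ) + 1 := Fin.val_succ k'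
            omega
      · intro h
        have := h c
        rw [← ha, ← hd] at this
        exact absurd hd1 this
    · have hnoprim : ∀ c', Dnat (fun i => A i c') ≠ 1 := by
        intro c' h
        exact hd1 (hcchoice ⟨c', h⟩)
      have hr'0 : r' = 0 := by
        apply hclause'
        intro j hDj1
        have hg1 : Dnat (fun i => A i (s j.succ)) ≠ 1 := hnoprim (s j.succ)
        have hg0 : Dnat (fun i => A i (s j.succ)) ≠ 0 :=
          fun h0 => hcolnz (s j.succ) ((Dnat_eq_zero_iff _).mp h0)
        have hdvd : ∀ i : Fin n, ((Dnat (fun i => A i (s j.succ)) : ℕ) : ℤ) ∣ C i j := by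
          intro i
          rw [hC, Matrix.submatrix_apply, hA1, Matrix.mul_apply]
          refine Finset.dvd_sum (fun l _ => Dvd.dvd.mul_left ?_ _)
          rw [Matrix.submatrix_apply]
          exact Dnat_dvd _ l
        have hgdvd : Dnat (fun i => A i (s j.succ)) ∣ Dnat (fun i => C i j) :=
          dvd_Dnat _ _ hdvd
        rw [hDj1] at hgdvd
        exact hg1 (Nat.dvd_one.mp hgdvd)
      have hd2 : 2 ≤ d := by omega
      refine ⟨σf, Uf, 0, Nat.zero_le _, hUfdet, ?_, fun _ => rfl⟩
      rw [hfactor]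
      refine ⟨hlowB, hnnB, hstB, fun k hk => absurd hk (by omega), ?_⟩
      intro k _
      rcases Fin.eq_zero_or_eq_succ k with rfl | ⟨k', rfl⟩
      · rw [hB00]; exact_mod_cast hd2
      · rw [hBss]
        exact hge2B' k' (by rw [hr'0]; exact Nat.zero_le _)

end HNF

/-- preferred Hermite normal form: linearly independent
`v 1, ..., v n ∈ ℤⁿ` can be reordered by a permutation `σ` and transformed by a
matrix `U ∈ GL_n(ℤ)` so that the matrix `B` with columns `U · v (σ k)` is upper
triangular, in Hermite normal form, with diagonal entries equal to 1 exactly in the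
first `r` columns. -/
theorem stmt15 (n : ℕ) (v : Fin n → Fin n → ℤ)
    (hindep : LinearIndependent ℝ (fun j => fun i => (v j i : ℝ))) :
    ∃ (σ : Equiv.Perm (Fin n)) (U : Matrix (Fin n) (Fin n) ℤ) (r : ℕ), r ≤ n ∧
      IsUnit U.det ∧
      ∀ B : Matrix (Fin n) (Fin n) ℤ,
        (∀ i k : Fin n, B i k = U.mulVec (v (σ k)) i) →
        (∀ i k : Fin n, k < i → B i k = 0) ∧
        (∀ i k : Fin n, 0 ≤ B i k) ∧
        (∀ i k : Fin n, i < k → B i k < B k k) ∧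
        (∀ k : Fin n, (k : ℕ) < r → B k k = 1) ∧
        (∀ k : Fin n, r ≤ (k : ℕ) → 2 ≤ B k k) := by
  classical
  set A : Matrix (Fin n) (Fin n) ℤ := Matrix.of fun i j => v j i with hAdef
  have hdet : A.det ≠ 0 := by
    intro h
    have hmap : (A.map (Int.cast : ℤ → ℝ)).det = 0 := by
      have : A.map (Int.cast : ℤ → ℝ) = (Int.castRingHom ℝ).mapMatrix A := rfl
      rw [this, ← RingHom.map_det (Int.castRingHom ℝ) A, h]
      simp
    obtain ⟨w, hw0, hwz⟩ := (Matrix.exists_mulVec_eq_zero_iff).mpr hmap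
    have hz : ∀ j, w j = 0 := by
      refine Fintype.linearIndependent_iff.mp hindep w ?_
      funext i
      have := congrFun hwz i
      simp only [Matrix.mulVec, dotProduct, Matrix.map_apply, Pi.zero_apply] at this ⊢
      rw [← this]
      simp only [Finset.sum_apply, Pi.smul_apply, smul_eq_mul]
      exact Finset.sum_congr rfl fun j _ => by rw [hAdef]; simp [mul_comm]
    exact hw0 (funext hz)
  obtain ⟨σ, U, r, hrn, hU, hgood, _⟩ := HNF.main n A hdet
  refine ⟨σ, U, r, hrn, hU, ?_⟩
  intro B hB
  have hBeq : ∀ i k, B i k = (U * A.submatrix id ⇑σ) i k := by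
    intro i k
    rw [hB i k, Matrix.mul_apply]
    rfl
  obtain ⟨h1, h2, h3, h4, h5⟩ := hgood
  exact ⟨fun i k h => by rw [hBeq]; exact h1 i k h,
    fun i k => by rw [hBeq]; exact h2 i k,
    fun i k h => by rw [hBeq, hBeq]; exact h3 i k h,
    fun k h => by rw [hBeq]; exact h4 k h,
    fun k h => by rw [hBeq]; exact h5 k h⟩
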